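/- Let μ and μ' be probability measures on K with μ ≪ μ' and μ' ≪ μ, and let β ≥ 1 be such that dμ/dμ' ≤ β almost everywhere. Let σ be a probability measure on K with σ ≪ μ and dσ/dμ ∈ L²(μ). Then ‖dσ/dμ' − 1‖_{L²(μ')} ≤ √β · ‖dσ/dμ − 1‖_{L²(μ)} + √(β − 1). -/

import Mathlib

open MeasureTheory

lemma sqrt_integral_sq_eq_eLpNorm {X : Type*} {m : MeasurableSpace X} (ν : Measure X)
    {f : X → ℝ} (hf : AEStronglyMeasurable f ν) :
    Real.sqrt (∫ x, f x ^ 2 ∂ν) = (eLpNorm f 2 ν).toReal := by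
  rw [eLpNorm_eq_lintegral_rpow_enorm_toReal (by norm_num) (by norm_num)]
  rw [integral_eq_lintegral_of_nonneg_ae (Filter.Eventually.of_forall fun x => sq_nonneg _)
    ((hf.aemeasurable.pow_const 2).aestronglyMeasurable)]
  have hpt : ∀ x, ENNReal.ofReal (f x ^ 2) = ‖f x‖ₑ ^ ((2 : ENNReal).toReal) := by
    intro x
    rw [ENNReal.toReal_ofNat, ENNReal.rpow_two, ← ofReal_norm,
      ← ENNReal.ofReal_pow (norm_nonneg _)]
    congr 1
    rw [Real.norm_eq_abs, sq_abs]
  simp_rw [hpt]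
  rw [← ENNReal.toReal_rpow, Real.sqrt_eq_rpow]
  norm_num

/-- if `μ ≪ μ'` and `μ' ≪ μ` are probability measures on `K` with
`dμ/dμ' ≤ β` a.e. for some `β ≥ 1`, and `σ ≪ μ` has `dσ/dμ ∈ L²(μ)`, then
`‖dσ/dμ' − 1‖_{L²(μ')} ≤ √β·‖dσ/dμ − 1‖_{L²(μ)} + √(β − 1)`. -/
theorem l2_error_transfer_alt
    {d : ℕ} (K : Set (EuclideanSpace ℝ (Fin d)))
    (hKcomp : IsCompact K) (hKconv : Convex ℝ K) (hKint : (interior K).Nonempty)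
    (μ μ' σ : Measure (EuclideanSpace ℝ (Fin d)))
    [IsProbabilityMeasure μ] [IsProbabilityMeasure μ'] [IsProbabilityMeasure σ]
    (hμK : μ Kᶜ = 0) (hμ'K : μ' Kᶜ = 0) (hσK : σ Kᶜ = 0)
    (hacc : μ ≪ μ') (hacc' : μ' ≪ μ)
    (β : ℝ) (hβ : 1 ≤ β)
    (hbd : ∀ᵐ x ∂μ', (μ.rnDeriv μ' x).toReal ≤ β)
    (hσac : σ ≪ μ)
    (hσL2 : MemLp (fun x => (σ.rnDeriv μ x).toReal) 2 μ) :
    Real.sqrt (∫ x, ((σ.rnDeriv μ' x).toReal - 1) ^ 2 ∂μ') ≤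
      Real.sqrt β * Real.sqrt (∫ x, ((σ.rnDeriv μ x).toReal - 1) ^ 2 ∂μ) +
        Real.sqrt (β - 1) := by
  set f : EuclideanSpace ℝ (Fin d) → ℝ := fun x => (σ.rnDeriv μ x).toReal with hf_def
  set g : EuclideanSpace ℝ (Fin d) → ℝ := fun x => (μ.rnDeriv μ' x).toReal with hg_def
  have hβ0 : (0:ℝ) ≤ β := le_trans zero_le_one hβ
  have hg_meas : Measurable g := (Measure.measurable_rnDeriv μ μ').ennreal_toReal
  have hf_meas : Measurable f := (Measure.measurable_rnDeriv σ μ).ennreal_toReal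
  have hg_nonneg : ∀ x, 0 ≤ g x := fun x => ENNReal.toReal_nonneg
  -- the three functions
  set u : EuclideanSpace ℝ (Fin d) → ℝ := fun x => (f x - 1) * g x with hu_def
  set v : EuclideanSpace ℝ (Fin d) → ℝ := fun x => g x - 1 with hv_def
  have hu_meas : Measurable u := (hf_meas.sub measurable_const).mul hg_meas
  have hv_meas : Measurable v := hg_meas.sub measurable_const
  -- a.e. multiplicativity of RN derivatives
  have hmul : (fun x => (σ.rnDeriv μ' x).toReal) =ᵐ[μ'] fun x => f x * g x := by
    filter_upwards [Measure.rnDeriv_mul_rnDeriv hσac] with x hx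
    rw [← hx]
    simp [ENNReal.toReal_mul, mul_comm, f, g]
  have hgβμ : ∀ᵐ x ∂μ, g x ≤ β := hacc.ae_le hbd
  -- L² facts over μ
  have hF2 : MemLp (fun x => f x - 1) 2 μ := hσL2.sub (memLp_const 1)
  have hF2int : Integrable (fun x => (f x - 1) ^ 2) μ := hF2.integrable_sq
  have hβF2int : Integrable (fun x => β * (f x - 1) ^ 2) μ := hF2int.const_mul β
  -- Integrability of (f-1)² g over μ
  have hInt1 : Integrable (fun x => (f x - 1) ^ 2 * g x) μ := by
    refine Integrable.mono' hβF2int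
      (((hf_meas.sub measurable_const).pow_const 2).mul hg_meas).aestronglyMeasurable ?_
    filter_upwards [hgβμ] with x hx
    rw [Real.norm_eq_abs, abs_of_nonneg (mul_nonneg (sq_nonneg _) (hg_nonneg x))]
    calc (f x - 1) ^ 2 * g x ≤ (f x - 1) ^ 2 * β := by
          exact mul_le_mul_of_nonneg_left hx (sq_nonneg _)
      _ = β * (f x - 1) ^ 2 := by ring
  haveI : μ.HaveLebesgueDecomposition μ' := Measure.haveLebesgueDecomposition_of_sigmaFinite μ μ'
  -- u² is integrable over μ'
  have hu2int : Integrable (fun x => u x ^ 2) μ' := by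
    have h := (integrable_rnDeriv_smul_iff (f := fun x => (f x - 1) ^ 2 * g x)
      hacc).mpr hInt1
    have : (fun x => (μ.rnDeriv μ' x).toReal • ((f x - 1) ^ 2 * g x)) = fun x => u x ^ 2 := by
      funext x; simp only [smul_eq_mul, hu_def, hg_def]; ring
    rwa [this] at h
  have huL2 : MemLp u 2 μ' :=
    (memLp_two_iff_integrable_sq hu_meas.aestronglyMeasurable).mpr hu2int
  -- value of ∫ u² over μ'
  have hA : ∫ x, u x ^ 2 ∂μ' = ∫ x, (f x - 1) ^ 2 * g x ∂μ := by
    rw [← integral_rnDeriv_smul (f := fun x => (f x - 1) ^ 2 * g x) hacc]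
    congr 1; funext x; simp only [smul_eq_mul, hu_def, hg_def]; ring
  have hAle : ∫ x, u x ^ 2 ∂μ' ≤ β * ∫ x, (f x - 1) ^ 2 ∂μ := by
    rw [hA, ← integral_const_mul]
    refine integral_mono_ae hInt1 hβF2int ?_
    filter_upwards [hgβμ] with x hx
    calc (f x - 1) ^ 2 * g x ≤ (f x - 1) ^ 2 * β :=
          mul_le_mul_of_nonneg_left hx (sq_nonneg _)
      _ = β * (f x - 1) ^ 2 := by ring
  -- g is bounded, hence nice over μ'
  have hgbd' : ∀ᵐ x ∂μ', ‖g x‖ ≤ β := by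
    filter_upwards [hbd] with x hx
    rwa [Real.norm_eq_abs, abs_of_nonneg (hg_nonneg x)]
  have hgL2' : MemLp g 2 μ' := MemLp.of_bound hg_meas.aestronglyMeasurable β hgbd'
  have hg2int' : Integrable (fun x => g x ^ 2) μ' := hgL2'.integrable_sq
  have hgint' : Integrable g μ' := hgL2'.integrable one_le_two
  have hvL2 : MemLp v 2 μ' := by
    refine MemLp.of_bound hv_meas.aestronglyMeasurable β ?_
    filter_upwards [hbd] with x hx
    have hx' : g x ≤ β := hx
    rw [Real.norm_eq_abs, abs_le]
    simp only [hv_def]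
    constructor <;> nlinarith [hg_nonneg x]
  -- ∫ g dμ' = 1
  have hgint_one : ∫ x, g x ∂μ' = 1 := by
    rw [hg_def]
    rw [Measure.integral_toReal_rnDeriv hacc]
    simp
  -- ∫ g² dμ' = ∫ g dμ ≤ β
  have hg2val : ∫ x, g x ^ 2 ∂μ' = ∫ x, g x ∂μ := by
    rw [← integral_rnDeriv_smul (f := g) hacc]
    congr 1; funext x; simp only [smul_eq_mul, hg_def]; ring
  have hgintμ : Integrable g μ := by
    refine Integrable.mono' (integrable_const β) hg_meas.aestronglyMeasurable ?_
    filter_upwards [hgβμ] with x hx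
    rwa [Real.norm_eq_abs, abs_of_nonneg (hg_nonneg x)]
  have hg2le : ∫ x, g x ^ 2 ∂μ' ≤ β := by
    rw [hg2val]
    calc ∫ x, g x ∂μ ≤ ∫ _x, β ∂μ := integral_mono_ae hgintμ (integrable_const β) hgβμ
      _ = β := by simp
  -- ∫ v² dμ' ≤ β - 1
  have hBle : ∫ x, v x ^ 2 ∂μ' ≤ β - 1 := by
    have hexp : ∀ x, v x ^ 2 = g x ^ 2 - 2 * g x + 1 := by intro x; simp only [hv_def]; ring
    have hsubInt : Integrable (fun x => g x ^ 2 - 2 * g x) μ' := by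
      exact hg2int'.sub (hgint'.const_mul 2)
    calc ∫ x, v x ^ 2 ∂μ' = ∫ x, (g x ^ 2 - 2 * g x + 1) ∂μ' := by simp_rw [hexp]
      _ = (∫ x, g x ^ 2 ∂μ') - 2 * ∫ x, g x ∂μ' + 1 := by
          rw [integral_add hsubInt (integrable_const 1),
            integral_sub hg2int' (hgint'.const_mul 2), integral_const_mul]
          simp
      _ = (∫ x, g x ^ 2 ∂μ') - 1 := by rw [hgint_one]; ring
      _ ≤ β - 1 := by linarith [hg2le]
  -- the target function is a.e. u + v
  set w : EuclideanSpace ℝ (Fin d) → ℝ := fun x => (σ.rnDeriv μ' x).toReal - 1 with hw_def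
  have hw_meas : Measurable w := (Measure.measurable_rnDeriv σ μ').ennreal_toReal.sub
    measurable_const
  have heq : w =ᵐ[μ'] fun x => u x + v x := by
    filter_upwards [hmul] with x hx
    simp only [hw_def, hu_def, hv_def, hx]
    ring
  -- triangle inequality
  have htri : eLpNorm w 2 μ' ≤ eLpNorm u 2 μ' + eLpNorm v 2 μ' := by
    rw [eLpNorm_congr_ae heq]
    exact eLpNorm_add_le hu_meas.aestronglyMeasurable hv_meas.aestronglyMeasurable one_le_two
  have htri' : (eLpNorm w 2 μ').toReal ≤ (eLpNorm u 2 μ').toReal + (eLpNorm v 2 μ').toReal := by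
    rw [← ENNReal.toReal_add huL2.eLpNorm_ne_top hvL2.eLpNorm_ne_top]
    exact ENNReal.toReal_mono (ENNReal.add_ne_top.mpr ⟨huL2.eLpNorm_ne_top, hvL2.eLpNorm_ne_top⟩)
      htri
  have hLHS : Real.sqrt (∫ x, ((σ.rnDeriv μ' x).toReal - 1) ^ 2 ∂μ') = (eLpNorm w 2 μ').toReal :=
    sqrt_integral_sq_eq_eLpNorm μ' hw_meas.aestronglyMeasurable
  have hu_eq : (eLpNorm u 2 μ').toReal = Real.sqrt (∫ x, u x ^ 2 ∂μ') :=
    (sqrt_integral_sq_eq_eLpNorm μ' hu_meas.aestronglyMeasurable).symm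
  have hv_eq : (eLpNorm v 2 μ').toReal = Real.sqrt (∫ x, v x ^ 2 ∂μ') :=
    (sqrt_integral_sq_eq_eLpNorm μ' hv_meas.aestronglyMeasurable).symm
  rw [hLHS]
  refine le_trans htri' ?_
  rw [hu_eq, hv_eq]
  have h1 : Real.sqrt (∫ x, u x ^ 2 ∂μ') ≤
      Real.sqrt β * Real.sqrt (∫ x, ((σ.rnDeriv μ x).toReal - 1) ^ 2 ∂μ) := by
    rw [← Real.sqrt_mul hβ0]
    exact Real.sqrt_le_sqrt hAle
  have h2 : Real.sqrt (∫ x, v x ^ 2 ∂μ') ≤ Real.sqrt (β - 1) := Real.sqrt_le_sqrt hBle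
  linarith
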